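/- Let h be the 5-dimensional real Lie algebra with Maurer–Cartan relations dθ^1=0, dθ^2=-θ^1∧θ^2, dθ^3=θ^1∧θ^3, dθ^4=2θ^1∧θ^4, dθ^5=θ^2∧θ^3. Then H^2_{-θ^1}(h) is three-dimensional, spanned by the classes of θ^1∧θ^3, θ^2∧θ^4, and θ^3∧θ^5. -/

import Mathlib

open scoped BigOperators

/-- The space of real-valued `k`-cochains on `L` (as bare functions). -/
abbrev Cochain (L : Type*) (k : ℕ) := (Fin k → L) → ℝ

variable {L : Type*} [LieRing L] [LieAlgebra ℝ L]

/-- A cochain is an alternating multilinear map, i.e. an element of `Hom(Λ^k g, ℝ)`. -/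
def IsAltMap {k : ℕ} (θ : Cochain L k) : Prop :=
  ∃ f : AlternatingMap ℝ L ℝ (Fin k), ⇑f = θ

/-- The Chevalley–Eilenberg differential with trivial coefficients:
`(dθ)(X_0,…,X_k) = ∑_{p<q} (-1)^{p+q} θ([X_p,X_q],X_0,…,X̂_p,…,X̂_q,…,X_k)`. -/
def CEd : {k : ℕ} → Cochain L k → Cochain L (k + 1)
  | 0, _ => fun _ => 0
  | (k + 1), θ => fun X =>
      ∑ p : Fin (k + 2), ∑ q : Fin (k + 2),
        if h : (p : ℕ) < (q : ℕ) then
          ((-1 : ℝ) ^ ((p : ℕ) + (q : ℕ))) *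
            θ (Fin.cons ⁅X p, X q⁆
                (Fin.removeNth ⟨(p : ℕ), lt_of_lt_of_le h (Nat.lt_succ_iff.mp q.isLt)⟩
                  (Fin.removeNth q X)))
        else 0

/-- The wedge product `ω ∧ θ` of a 1-cochain with a `k`-cochain. -/
def oneWedge {k : ℕ} (ω : L → ℝ) (θ : Cochain L k) : Cochain L (k + 1) :=
  fun X => ∑ i : Fin (k + 1), ((-1 : ℝ) ^ (i : ℕ)) * ω (X i) * θ (Fin.removeNth i X)

/-- The deformed differential `d_{λω} θ = dθ + λ ω ∧ θ`. -/
def dDef {k : ℕ} (lam : ℝ) (ω : L → ℝ) (θ : Cochain L k) : Cochain L (k + 1) :=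
  CEd θ + lam • oneWedge ω θ

/-- The submodule of alternating multilinear `k`-cochains, i.e. `C^k(g,ℝ) = Hom(Λ^k g, ℝ)`. -/
def AltSub (L : Type*) [LieRing L] [LieAlgebra ℝ L] (k : ℕ) : Submodule ℝ (Cochain L k) where
  carrier := {θ | IsAltMap θ}
  add_mem' := by rintro θ₁ θ₂ ⟨f, rfl⟩ ⟨g, rfl⟩; exact ⟨f + g, rfl⟩
  zero_mem' := ⟨0, rfl⟩
  smul_mem' := by rintro c θ ⟨f, rfl⟩; exact ⟨c • f, rfl⟩

/-- The Chevalley–Eilenberg differential as a linear map. -/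
def CEdL (L : Type*) [LieRing L] [LieAlgebra ℝ L] (k : ℕ) :
    Cochain L k →ₗ[ℝ] Cochain L (k + 1) where
  toFun := CEd
  map_add' θ₁ θ₂ := by
    cases k with
    | zero => funext X; exact (zero_add (0:ℝ)).symm
    | succ k =>
      funext X
      show _ = CEd θ₁ X + CEd θ₂ X
      simp only [CEd, Pi.add_apply]
      rw [← Finset.sum_add_distrib]
      refine Finset.sum_congr rfl fun p _ => ?_
      rw [← Finset.sum_add_distrib]
      refine Finset.sum_congr rfl fun q _ => ?_
      split_ifs <;> simp [mul_add]
  map_smul' c θ := by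
    cases k with
    | zero => funext X; exact (smul_zero c).symm
    | succ k =>
      funext X
      show _ = c * CEd θ X
      simp only [CEd, Pi.smul_apply, smul_eq_mul]
      rw [Finset.mul_sum]
      refine Finset.sum_congr rfl fun p _ => ?_
      rw [Finset.mul_sum]
      refine Finset.sum_congr rfl fun q _ => ?_
      split_ifs with h
      · ring
      · exact (mul_zero c).symm

/-- The operator `θ ↦ ω ∧ θ` as a linear map. -/
def oneWedgeL (L : Type*) [LieRing L] [LieAlgebra ℝ L] (ω : L → ℝ) (k : ℕ) :
    Cochain L k →ₗ[ℝ] Cochain L (k + 1) where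
  toFun := oneWedge ω
  map_add' θ₁ θ₂ := by
    funext X
    simp [oneWedge, mul_add, Finset.sum_add_distrib]
  map_smul' c θ := by
    funext X
    simp only [oneWedge, Pi.smul_apply, smul_eq_mul, RingHom.id_apply]
    rw [Finset.mul_sum]
    exact Finset.sum_congr rfl fun i _ => by ring

/-- The deformed differential `d_{λω}` as a linear map. -/
noncomputable def dDefL (L : Type*) [LieRing L] [LieAlgebra ℝ L]
    (lam : ℝ) (ω : L → ℝ) (k : ℕ) : Cochain L k →ₗ[ℝ] Cochain L (k + 1) :=
  CEdL L k + lam • oneWedgeL L ω k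

/-- Deformed `k`-cocycles: alternating cochains with `d_{λω} θ = 0`. -/
noncomputable def Zdef (L : Type*) [LieRing L] [LieAlgebra ℝ L]
    (lam : ℝ) (ω : L → ℝ) (k : ℕ) : Submodule ℝ (Cochain L k) :=
  AltSub L k ⊓ LinearMap.ker (dDefL L lam ω k)

/-- Deformed `(k+1)`-coboundaries: images under `d_{λω}` of alternating `k`-cochains. -/
noncomputable def Bdef (L : Type*) [LieRing L] [LieAlgebra ℝ L]
    (lam : ℝ) (ω : L → ℝ) (k : ℕ) : Submodule ℝ (Cochain L (k + 1)) :=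
  Submodule.map (dDefL L lam ω k) (AltSub L k)

/-- The deformed cohomology `H^{k+1}_{λω}(g)` = closed forms modulo exact forms. -/
noncomputable abbrev Hdef (L : Type*) [LieRing L] [LieAlgebra ℝ L]
    (lam : ℝ) (ω : L → ℝ) (k : ℕ) :=
  Zdef L lam ω (k + 1) ⧸
    Submodule.comap (Zdef L lam ω (k + 1)).subtype (Bdef L lam ω k)

/-- The 1-cochain associated to a linear functional. -/
def c1 {L : Type*} (f : L → ℝ) : Cochain L 1 := fun X => f (X 0)

/-- The wedge product `f ∧ g` of two 1-forms, as a 2-cochain. -/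
def w2 {L : Type*} (f g : L → ℝ) : Cochain L 2 :=
  fun X => f (X 0) * g (X 1) - f (X 1) * g (X 0)


set_option linter.unusedSectionVars false
set_option maxHeartbeats 1000000

section Aux

lemma fin2_eta {α : Type*} (X : Fin 2 → α) : X = ![X 0, X 1] := by
  funext i; fin_cases i <;> rfl

lemma fin3_eta {α : Type*} (X : Fin 3 → α) : X = ![X 0, X 1, X 2] := by
  funext i; fin_cases i <;> rfl

lemma upd2_0 {α : Type*} (a a' b : α) : Function.update ![a, b] 0 a' = ![a', b] := by
  funext i; fin_cases i <;> simp
lemma upd2_1 {α : Type*} (a b b' : α) : Function.update ![a, b] 1 b' = ![a, b'] := by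
  funext i; fin_cases i <;> simp
lemma upd1_0 {α : Type*} (a a' : α) : Function.update ![a] 0 a' = ![a'] := by
  funext i; fin_cases i <;> simp

variable {L : Type*} [LieRing L] [LieAlgebra ℝ L]

/-- Alternating 1-form from a linear functional. -/
def altW1 (f : L →ₗ[ℝ] ℝ) : AlternatingMap ℝ L ℝ (Fin 1) where
  toFun X := f (X 0)
  map_update_add' X i x y := by fin_cases i; simp [upd1_0 (X 0)]
  map_update_smul' X i c x := by fin_cases i; simp [upd1_0 (X 0)]
  map_eq_zero_of_eq' X i j _ hne := absurd (Subsingleton.elim i j) hne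

/-- Alternating 2-form from two linear functionals. -/
def altW2 (f g : L →ₗ[ℝ] ℝ) : AlternatingMap ℝ L ℝ (Fin 2) where
  toFun X := f (X 0) * g (X 1) - f (X 1) * g (X 0)
  map_update_add' X i x y := by
    have h := fin2_eta X
    fin_cases i <;> rw [h] <;> simp [upd2_0, upd2_1] <;> ring
  map_update_smul' X i c x := by
    have h := fin2_eta X
    fin_cases i <;> rw [h] <;> simp [upd2_0, upd2_1] <;> ring
  map_eq_zero_of_eq' X i j hij hne := by
    fin_cases i <;> fin_cases j <;> simp_all

/-- The underlying linear map of an alternating 1-form. -/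
def lin1 (f : AlternatingMap ℝ L ℝ (Fin 1)) : L →ₗ[ℝ] ℝ where
  toFun v := f ![v]
  map_add' v w := by
    have := f.map_update_add ![v] 0 v w
    simpa [upd1_0] using this
  map_smul' c v := by
    have := f.map_update_smul ![v] 0 c v
    simpa [upd1_0] using this

/-- The underlying bilinear map of an alternating 2-form. -/
def bil2 (f : AlternatingMap ℝ L ℝ (Fin 2)) : L →ₗ[ℝ] L →ₗ[ℝ] ℝ :=
  LinearMap.mk₂ ℝ (fun x y => f ![x, y])
    (fun x x' y => by
      have := f.map_update_add ![x, y] 0 x x'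
      simpa [upd2_0] using this)
    (fun c x y => by
      have := f.map_update_smul ![x, y] 0 c x
      simpa [upd2_0] using this)
    (fun x y y' => by
      have := f.map_update_add ![x, y] 1 y y'
      simpa [upd2_1] using this)
    (fun c x y => by
      have := f.map_update_smul ![x, y] 1 c y
      simpa [upd2_1] using this)

lemma bil2_apply (f : AlternatingMap ℝ L ℝ (Fin 2)) (x y : L) :
    bil2 f x y = f ![x, y] := rfl

lemma alt2_neg_left (f : AlternatingMap ℝ L ℝ (Fin 2)) (x y : L) :
    f ![-x, y] = -f ![x, y] := by
  rw [← bil2_apply, ← bil2_apply, map_neg, LinearMap.neg_apply]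

lemma alt2_smul_left (f : AlternatingMap ℝ L ℝ (Fin 2)) (c : ℝ) (x y : L) :
    f ![c • x, y] = c * f ![x, y] := by
  rw [← bil2_apply, ← bil2_apply, map_smul]; rfl

lemma alt2_zero_left (f : AlternatingMap ℝ L ℝ (Fin 2)) (y : L) :
    f ![(0 : L), y] = 0 := by
  rw [← bil2_apply, map_zero]; rfl

lemma alt2_swap (f : AlternatingMap ℝ L ℝ (Fin 2)) (x y : L) :
    f ![y, x] = -f ![x, y] := by
  have := f.map_swap ![x, y] (i := 0) (j := 1) (by decide)
  have h : (![x, y] ∘ Equiv.swap (0 : Fin 2) 1) = ![y, x] := by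
    funext i; fin_cases i <;> rfl
  rw [h] at this; linarith

lemma alt2_diag (f : AlternatingMap ℝ L ℝ (Fin 2)) (x : L) :
    f ![x, x] = 0 :=
  f.map_eq_zero_of_eq ![x, x] (i := 0) (j := 1) rfl (by decide)

end Aux

section Formulas

variable {L : Type*} [LieRing L] [LieAlgebra ℝ L]

lemma CEd_one (θ : Cochain L 1) (X : Fin 2 → L) :
    CEd θ X = -θ ![⁅X 0, X 1⁆] := by
  show (∑ p : Fin 2, ∑ q : Fin 2, _) = _
  rw [Fin.sum_univ_two, Fin.sum_univ_two]
  norm_num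
  congr 1
  funext i; fin_cases i; rfl

lemma CEd_two (θ : Cochain L 2) (X : Fin 3 → L) :
    CEd θ X = -θ ![⁅X 0, X 1⁆, X 2] + θ ![⁅X 0, X 2⁆, X 1] - θ ![⁅X 1, X 2⁆, X 0] := by
  show (∑ p : Fin 3, ∑ q : Fin 3, _) = _
  rw [Fin.sum_univ_three, Fin.sum_univ_three, Fin.sum_univ_three, Fin.sum_univ_three]
  norm_num
  have h01 : (Fin.cons ⁅X 0, X 1⁆ (Fin.tail (Fin.removeNth 1 X)) : Fin 2 → L)
      = ![⁅X 0, X 1⁆, X 2] := by funext i; fin_cases i <;> rfl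
  have h02 : (Fin.cons ⁅X 0, X 2⁆ (Fin.tail (Fin.removeNth 2 X)) : Fin 2 → L)
      = ![⁅X 0, X 2⁆, X 1] := by funext i; fin_cases i <;> rfl
  have h12 : (Fin.cons ⁅X 1, X 2⁆ (Fin.removeNth 1 (Fin.removeNth 2 X)) : Fin 2 → L)
      = ![⁅X 1, X 2⁆, X 0] := by funext i; fin_cases i <;> rfl
  rw [h01, h02, h12]
  ring

lemma oneWedge_one (ω : L → ℝ) (θ : Cochain L 1) (X : Fin 2 → L) :
    oneWedge ω θ X = ω (X 0) * θ ![X 1] - ω (X 1) * θ ![X 0] := by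
  show (∑ i : Fin 2, _) = _
  rw [Fin.sum_univ_two]
  have h0 : (Fin.removeNth (0 : Fin 2) X) = ![X 1] := by funext i; fin_cases i; rfl
  have h1 : (Fin.removeNth (1 : Fin 2) X) = ![X 0] := by funext i; fin_cases i; rfl
  rw [h0, h1]; norm_num; ring

lemma oneWedge_two (ω : L → ℝ) (θ : Cochain L 2) (X : Fin 3 → L) :
    oneWedge ω θ X = ω (X 0) * θ ![X 1, X 2] - ω (X 1) * θ ![X 0, X 2]
      + ω (X 2) * θ ![X 0, X 1] := by
  show (∑ i : Fin 3, _) = _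
  rw [Fin.sum_univ_three]
  have h0 : (Fin.removeNth (0 : Fin 3) X) = ![X 1, X 2] := by funext i; fin_cases i <;> rfl
  have h1 : (Fin.removeNth (1 : Fin 3) X) = ![X 0, X 2] := by funext i; fin_cases i <;> rfl
  have h2 : (Fin.removeNth (2 : Fin 3) X) = ![X 0, X 1] := by funext i; fin_cases i <;> rfl
  rw [h0, h1, h2]; norm_num; ring

lemma dDefL_one_apply (lam : ℝ) (ω : L → ℝ) (θ : Cochain L 1) (X : Fin 2 → L) :
    dDefL L lam ω 1 θ X = -θ ![⁅X 0, X 1⁆]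
      + lam * (ω (X 0) * θ ![X 1] - ω (X 1) * θ ![X 0]) := by
  show (CEd θ + lam • oneWedge ω θ) X = _
  simp only [Pi.add_apply, Pi.smul_apply, smul_eq_mul]
  rw [CEd_one, oneWedge_one]

lemma dDefL_two_apply (lam : ℝ) (ω : L → ℝ) (θ : Cochain L 2) (X : Fin 3 → L) :
    dDefL L lam ω 2 θ X = -θ ![⁅X 0, X 1⁆, X 2] + θ ![⁅X 0, X 2⁆, X 1] - θ ![⁅X 1, X 2⁆, X 0]
      + lam * (ω (X 0) * θ ![X 1, X 2] - ω (X 1) * θ ![X 0, X 2] + ω (X 2) * θ ![X 0, X 1]) := by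
  show (CEd θ + lam • oneWedge ω θ) X = _
  simp only [Pi.add_apply, Pi.smul_apply, smul_eq_mul]
  rw [CEd_two, oneWedge_two]

end Formulas

section Bracket

variable {H : Type*} [LieRing H] [LieAlgebra ℝ H] (E : Module.Basis (Fin 5) ℝ H)

lemma bracket_expand
    (b01 : ⁅E 0, E 1⁆ = E 1) (b02 : ⁅E 0, E 2⁆ = -E 2)
    (b03 : ⁅E 0, E 3⁆ = (-2 : ℝ) • E 3) (b12 : ⁅E 1, E 2⁆ = -E 4)
    (b04 : ⁅E 0, E 4⁆ = 0) (b13 : ⁅E 1, E 3⁆ = 0) (b14 : ⁅E 1, E 4⁆ = 0)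
    (b23 : ⁅E 2, E 3⁆ = 0) (b24 : ⁅E 2, E 4⁆ = 0) (b34 : ⁅E 3, E 4⁆ = 0)
    (X Y : H) :
    ⁅X, Y⁆ = (E.repr X 0 * E.repr Y 1 - E.repr X 1 * E.repr Y 0) • E 1
      + (E.repr X 2 * E.repr Y 0 - E.repr X 0 * E.repr Y 2) • E 2
      + (2 * (E.repr X 3 * E.repr Y 0 - E.repr X 0 * E.repr Y 3)) • E 3
      + (E.repr X 2 * E.repr Y 1 - E.repr X 1 * E.repr Y 2) • E 4 := by
  have skew : ∀ a b : H, ⁅b, a⁆ = -⁅a, b⁆ := fun a b => by rw [← lie_skew a b, neg_neg]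
  have hX := E.sum_repr X
  have hY := E.sum_repr Y
  conv_lhs => rw [← hX, ← hY]
  simp only [Fin.sum_univ_five]
  simp only [add_lie, lie_add, smul_lie, lie_smul, lie_self, smul_zero, zero_add, add_zero,
    b01, b02, b03, b04, b12, b13, b14, b23, b24, b34,
    skew (E 0) (E 1), skew (E 0) (E 2), skew (E 0) (E 3), skew (E 0) (E 4),
    skew (E 1) (E 2), skew (E 1) (E 3), skew (E 1) (E 4),
    skew (E 2) (E 3), skew (E 2) (E 4), skew (E 3) (E 4)]
  module

lemma repr_bracket
    (b01 : ⁅E 0, E 1⁆ = E 1) (b02 : ⁅E 0, E 2⁆ = -E 2)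
    (b03 : ⁅E 0, E 3⁆ = (-2 : ℝ) • E 3) (b12 : ⁅E 1, E 2⁆ = -E 4)
    (b04 : ⁅E 0, E 4⁆ = 0) (b13 : ⁅E 1, E 3⁆ = 0) (b14 : ⁅E 1, E 4⁆ = 0)
    (b23 : ⁅E 2, E 3⁆ = 0) (b24 : ⁅E 2, E 4⁆ = 0) (b34 : ⁅E 3, E 4⁆ = 0)
    (X Y : H) :
    E.repr ⁅X, Y⁆ 0 = 0 ∧
    E.repr ⁅X, Y⁆ 1 = E.repr X 0 * E.repr Y 1 - E.repr X 1 * E.repr Y 0 ∧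
    E.repr ⁅X, Y⁆ 2 = E.repr X 2 * E.repr Y 0 - E.repr X 0 * E.repr Y 2 ∧
    E.repr ⁅X, Y⁆ 3 = 2 * (E.repr X 3 * E.repr Y 0 - E.repr X 0 * E.repr Y 3) ∧
    E.repr ⁅X, Y⁆ 4 = E.repr X 2 * E.repr Y 1 - E.repr X 1 * E.repr Y 2 := by
  rw [bracket_expand E b01 b02 b03 b12 b04 b13 b14 b23 b24 b34 X Y]
  refine ⟨?_, ?_, ?_, ?_, ?_⟩ <;>
    simp [map_add, map_smul, Module.Basis.repr_self, Finsupp.single_apply]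

end Bracket

section Expand

variable {H : Type*} [LieRing H] [LieAlgebra ℝ H]

lemma alt2_expand (E : Module.Basis (Fin 5) ℝ H) (f : AlternatingMap ℝ H ℝ (Fin 2)) (X Y : H) :
    f ![X, Y] = ∑ i : Fin 5, ∑ j : Fin 5, E.repr X i * E.repr Y j * f ![E i, E j] := by
  rw [← bil2_apply]
  conv_lhs => rw [← E.sum_repr X, ← E.sum_repr Y]
  simp only [map_sum, LinearMap.sum_apply, map_smul, LinearMap.smul_apply, smul_eq_mul,
    Finset.mul_sum]
  rw [Finset.sum_comm]
  exact Finset.sum_congr rfl fun i _ => Finset.sum_congr rfl fun j _ => by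
    rw [bil2_apply]; ring

end Expand

section ZMem

variable {H : Type*} [LieRing H] [LieAlgebra ℝ H] (E : Module.Basis (Fin 5) ℝ H)

lemma w2_coe (a b : Fin 5) :
    ⇑(altW2 (E.coord a) (E.coord b)) =
      w2 (fun v => E.repr v a) (fun v => E.repr v b) := rfl

lemma w2_mem_Z
    (b01 : ⁅E 0, E 1⁆ = E 1) (b02 : ⁅E 0, E 2⁆ = -E 2)
    (b03 : ⁅E 0, E 3⁆ = (-2 : ℝ) • E 3) (b12 : ⁅E 1, E 2⁆ = -E 4)
    (b04 : ⁅E 0, E 4⁆ = 0) (b13 : ⁅E 1, E 3⁆ = 0) (b14 : ⁅E 1, E 4⁆ = 0)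
    (b23 : ⁅E 2, E 3⁆ = 0) (b24 : ⁅E 2, E 4⁆ = 0) (b34 : ⁅E 3, E 4⁆ = 0)
    (a b : Fin 5)
    (hcl : ∀ X : Fin 3 → H,
      dDefL H (-1) (fun v => E.repr v 0) 2
        (w2 (fun v => E.repr v a) (fun v => E.repr v b)) X = 0) :
    w2 (fun v => E.repr v a) (fun v => E.repr v b) ∈
      Zdef H (-1) (fun v => E.repr v 0) 2 := by
  refine ⟨⟨altW2 (E.coord a) (E.coord b), w2_coe E a b⟩, ?_⟩
  exact LinearMap.mem_ker.mpr (funext hcl)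

lemma w2_02_mem
    (b01 : ⁅E 0, E 1⁆ = E 1) (b02 : ⁅E 0, E 2⁆ = -E 2)
    (b03 : ⁅E 0, E 3⁆ = (-2 : ℝ) • E 3) (b12 : ⁅E 1, E 2⁆ = -E 4)
    (b04 : ⁅E 0, E 4⁆ = 0) (b13 : ⁅E 1, E 3⁆ = 0) (b14 : ⁅E 1, E 4⁆ = 0)
    (b23 : ⁅E 2, E 3⁆ = 0) (b24 : ⁅E 2, E 4⁆ = 0) (b34 : ⁅E 3, E 4⁆ = 0) :
    w2 (fun v => E.repr v 0) (fun v => E.repr v 2) ∈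
      Zdef H (-1) (fun v => E.repr v 0) 2 := by
  refine w2_mem_Z E b01 b02 b03 b12 b04 b13 b14 b23 b24 b34 0 2 (fun X => ?_)
  obtain ⟨r010, r011, r012, r013, r014⟩ :=
    repr_bracket E b01 b02 b03 b12 b04 b13 b14 b23 b24 b34 (X 0) (X 1)
  obtain ⟨r020, r021, r022, r023, r024⟩ :=
    repr_bracket E b01 b02 b03 b12 b04 b13 b14 b23 b24 b34 (X 0) (X 2)
  obtain ⟨r120, r121, r122, r123, r124⟩ :=
    repr_bracket E b01 b02 b03 b12 b04 b13 b14 b23 b24 b34 (X 1) (X 2)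
  rw [dDefL_two_apply]
  simp only [w2, Matrix.cons_val_zero, Matrix.cons_val_one, Matrix.head_cons,
    r010, r011, r012, r013, r014, r020, r021, r022, r023, r024,
    r120, r121, r122, r123, r124]
  ring

lemma w2_13_mem
    (b01 : ⁅E 0, E 1⁆ = E 1) (b02 : ⁅E 0, E 2⁆ = -E 2)
    (b03 : ⁅E 0, E 3⁆ = (-2 : ℝ) • E 3) (b12 : ⁅E 1, E 2⁆ = -E 4)
    (b04 : ⁅E 0, E 4⁆ = 0) (b13 : ⁅E 1, E 3⁆ = 0) (b14 : ⁅E 1, E 4⁆ = 0)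
    (b23 : ⁅E 2, E 3⁆ = 0) (b24 : ⁅E 2, E 4⁆ = 0) (b34 : ⁅E 3, E 4⁆ = 0) :
    w2 (fun v => E.repr v 1) (fun v => E.repr v 3) ∈
      Zdef H (-1) (fun v => E.repr v 0) 2 := by
  refine w2_mem_Z E b01 b02 b03 b12 b04 b13 b14 b23 b24 b34 1 3 (fun X => ?_)
  obtain ⟨r010, r011, r012, r013, r014⟩ :=
    repr_bracket E b01 b02 b03 b12 b04 b13 b14 b23 b24 b34 (X 0) (X 1)
  obtain ⟨r020, r021, r022, r023, r024⟩ :=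
    repr_bracket E b01 b02 b03 b12 b04 b13 b14 b23 b24 b34 (X 0) (X 2)
  obtain ⟨r120, r121, r122, r123, r124⟩ :=
    repr_bracket E b01 b02 b03 b12 b04 b13 b14 b23 b24 b34 (X 1) (X 2)
  rw [dDefL_two_apply]
  simp only [w2, Matrix.cons_val_zero, Matrix.cons_val_one, Matrix.head_cons,
    r010, r011, r012, r013, r014, r020, r021, r022, r023, r024,
    r120, r121, r122, r123, r124]
  ring

lemma w2_24_mem
    (b01 : ⁅E 0, E 1⁆ = E 1) (b02 : ⁅E 0, E 2⁆ = -E 2)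
    (b03 : ⁅E 0, E 3⁆ = (-2 : ℝ) • E 3) (b12 : ⁅E 1, E 2⁆ = -E 4)
    (b04 : ⁅E 0, E 4⁆ = 0) (b13 : ⁅E 1, E 3⁆ = 0) (b14 : ⁅E 1, E 4⁆ = 0)
    (b23 : ⁅E 2, E 3⁆ = 0) (b24 : ⁅E 2, E 4⁆ = 0) (b34 : ⁅E 3, E 4⁆ = 0) :
    w2 (fun v => E.repr v 2) (fun v => E.repr v 4) ∈
      Zdef H (-1) (fun v => E.repr v 0) 2 := by
  refine w2_mem_Z E b01 b02 b03 b12 b04 b13 b14 b23 b24 b34 2 4 (fun X => ?_)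
  obtain ⟨r010, r011, r012, r013, r014⟩ :=
    repr_bracket E b01 b02 b03 b12 b04 b13 b14 b23 b24 b34 (X 0) (X 1)
  obtain ⟨r020, r021, r022, r023, r024⟩ :=
    repr_bracket E b01 b02 b03 b12 b04 b13 b14 b23 b24 b34 (X 0) (X 2)
  obtain ⟨r120, r121, r122, r123, r124⟩ :=
    repr_bracket E b01 b02 b03 b12 b04 b13 b14 b23 b24 b34 (X 1) (X 2)
  rw [dDefL_two_apply]
  simp only [w2, Matrix.cons_val_zero, Matrix.cons_val_one, Matrix.head_cons,
    r010, r011, r012, r013, r014, r020, r021, r022, r023, r024,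
    r120, r121, r122, r123, r124]
  ring

end ZMem

section Quot

variable {H : Type*} [LieRing H] [LieAlgebra ℝ H] (E : Module.Basis (Fin 5) ℝ H)

/-- Evaluation of a `Zdef`-cocycle at the three test pairs. -/
noncomputable def evalZ : Zdef H (-1) (fun v => E.repr v 0) 2 →ₗ[ℝ] (Fin 3 → ℝ) where
  toFun z := ![z.1 ![E 0, E 2], z.1 ![E 1, E 3], z.1 ![E 2, E 4]]
  map_add' u v := by funext i; fin_cases i <;> rfl
  map_smul' c u := by funext i; fin_cases i <;> rfl

lemma B_vanish
    (b02 : ⁅E 0, E 2⁆ = -E 2) (b13 : ⁅E 1, E 3⁆ = 0) (b24 : ⁅E 2, E 4⁆ = 0)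
    (y : Cochain H 2) (hy : y ∈ Bdef H (-1) (fun v => E.repr v 0) 1) :
    y ![E 0, E 2] = 0 ∧ y ![E 1, E 3] = 0 ∧ y ![E 2, E 4] = 0 := by
  obtain ⟨g, ⟨fg, rfl⟩, rfl⟩ := hy
  have hneg : fg ![-E 2] = -fg ![E 2] := by
    show lin1 fg (-E 2) = -lin1 fg (E 2); rw [map_neg]
  have hzero : fg ![(0 : H)] = 0 := by
    show lin1 fg (0 : H) = 0; rw [map_zero]
  refine ⟨?_, ?_, ?_⟩
  · rw [dDefL_one_apply]
    simp only [Matrix.cons_val_zero, Matrix.cons_val_one, Matrix.head_cons]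
    rw [b02, hneg]
    simp [Module.Basis.repr_self_apply]
  · rw [dDefL_one_apply]
    simp only [Matrix.cons_val_zero, Matrix.cons_val_one, Matrix.head_cons]
    rw [b13, hzero]
    simp [Module.Basis.repr_self_apply]
  · rw [dDefL_one_apply]
    simp only [Matrix.cons_val_zero, Matrix.cons_val_one, Matrix.head_cons]
    rw [b24, hzero]
    simp [Module.Basis.repr_self_apply]

end Quot

section Relations

variable {H : Type*} [LieRing H] [LieAlgebra ℝ H] (E : Module.Basis (Fin 5) ℝ H)

lemma altW1_apply (f : H →ₗ[ℝ] ℝ) (X : Fin 1 → H) : altW1 f X = f (X 0) := rfl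

lemma cocycle_relations
    (b01 : ⁅E 0, E 1⁆ = E 1) (b02 : ⁅E 0, E 2⁆ = -E 2)
    (b03 : ⁅E 0, E 3⁆ = (-2 : ℝ) • E 3) (b12 : ⁅E 1, E 2⁆ = -E 4)
    (b04 : ⁅E 0, E 4⁆ = 0) (b13 : ⁅E 1, E 3⁆ = 0) (b14 : ⁅E 1, E 4⁆ = 0)
    (b23 : ⁅E 2, E 3⁆ = 0) (b24 : ⁅E 2, E 4⁆ = 0) (b34 : ⁅E 3, E 4⁆ = 0)
    (f : AlternatingMap ℝ H ℝ (Fin 2))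
    (hd : dDefL H (-1) (fun v => E.repr v 0) 2 ⇑f = 0) :
    f ![E 1, E 4] = 0 ∧ f ![E 2, E 3] = 0 ∧ f ![E 3, E 4] = 0 ∧
      f ![E 0, E 4] = -f ![E 1, E 2] := by
  have e014 := congrFun hd ![E 0, E 1, E 4]
  have e023 := congrFun hd ![E 0, E 2, E 3]
  have e034 := congrFun hd ![E 0, E 3, E 4]
  have e012 := congrFun hd ![E 0, E 1, E 2]
  rw [dDefL_two_apply] at e014 e023 e034 e012
  simp only [Matrix.cons_val_zero, Matrix.cons_val_one, Matrix.head_cons,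
    Matrix.cons_val_two, Matrix.tail_cons, Pi.zero_apply] at e014 e023 e034 e012
  rw [b01, b04, b14] at e014
  rw [b02, b03, b23] at e023
  rw [b03, b04, b34] at e034
  rw [b01, b02, b12] at e012
  rw [alt2_zero_left, alt2_zero_left] at e014
  rw [alt2_neg_left, alt2_smul_left, alt2_zero_left, alt2_swap f (E 2) (E 3)] at e023
  rw [alt2_smul_left, alt2_zero_left, alt2_zero_left] at e034
  rw [alt2_neg_left, alt2_neg_left, alt2_swap f (E 1) (E 2),
    alt2_swap f (E 0) (E 4)] at e012
  have n20 : ¬((2 : Fin 5) = 0) := by decide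
  have n30 : ¬((3 : Fin 5) = 0) := by decide
  have n40 : ¬((4 : Fin 5) = 0) := by decide
  norm_num [Module.Basis.repr_self_apply, Finsupp.single_apply, n20, n30, n40] at e014 e023 e034 e012
  refine ⟨by linarith, by linarith, by linarith, by linarith⟩

end Relations

section Decomp

variable {H : Type*} [LieRing H] [LieAlgebra ℝ H] (E : Module.Basis (Fin 5) ℝ H)

lemma exact_decomp
    (b01 : ⁅E 0, E 1⁆ = E 1) (b02 : ⁅E 0, E 2⁆ = -E 2)
    (b03 : ⁅E 0, E 3⁆ = (-2 : ℝ) • E 3) (b12 : ⁅E 1, E 2⁆ = -E 4)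
    (b04 : ⁅E 0, E 4⁆ = 0) (b13 : ⁅E 1, E 3⁆ = 0) (b14 : ⁅E 1, E 4⁆ = 0)
    (b23 : ⁅E 2, E 3⁆ = 0) (b24 : ⁅E 2, E 4⁆ = 0) (b34 : ⁅E 3, E 4⁆ = 0)
    (f : AlternatingMap ℝ H ℝ (Fin 2))
    (hd : dDefL H (-1) (fun v => E.repr v 0) 2 ⇑f = 0) :
    dDefL H (-1) (fun v => E.repr v 0) 1
      ((-(f ![E 0, E 1]) / 2) • ⇑(altW1 (E.coord 1))
        + f ![E 0, E 3] • ⇑(altW1 (E.coord 3))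
        + f ![E 1, E 2] • ⇑(altW1 (E.coord 4)))
    = ⇑f - (f ![E 0, E 2] • w2 (fun v => E.repr v 0) (fun v => E.repr v 2)
         + f ![E 1, E 3] • w2 (fun v => E.repr v 1) (fun v => E.repr v 3)
         + f ![E 2, E 4] • w2 (fun v => E.repr v 2) (fun v => E.repr v 4)) := by
  obtain ⟨r14, r23, r34, r04⟩ :=
    cocycle_relations E b01 b02 b03 b12 b04 b13 b14 b23 b24 b34 f hd
  funext X
  rw [map_add, map_add, map_smul, map_smul, map_smul]
  simp only [Pi.add_apply, Pi.sub_apply, Pi.smul_apply, smul_eq_mul]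
  rw [dDefL_one_apply, dDefL_one_apply, dDefL_one_apply]
  obtain ⟨q0, q1, q2, q3, q4⟩ :=
    repr_bracket E b01 b02 b03 b12 b04 b13 b14 b23 b24 b34 (X 0) (X 1)
  have hfx : f X = f ![X 0, X 1] := congrArg f (fin2_eta X)
  rw [hfx, alt2_expand E f (X 0) (X 1)]
  simp only [Fin.sum_univ_five, altW1_apply, Module.Basis.coord_apply, Matrix.cons_val_zero,
    Matrix.cons_val_one, Matrix.head_cons, w2]
  rw [q1, q3, q4]
  have s10 : f ![E 1, E 0] = -f ![E 0, E 1] := alt2_swap f _ _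
  have s20 : f ![E 2, E 0] = -f ![E 0, E 2] := alt2_swap f _ _
  have s30 : f ![E 3, E 0] = -f ![E 0, E 3] := alt2_swap f _ _
  have s40 : f ![E 4, E 0] = -f ![E 0, E 4] := alt2_swap f _ _
  have s21 : f ![E 2, E 1] = -f ![E 1, E 2] := alt2_swap f _ _
  have s31 : f ![E 3, E 1] = -f ![E 1, E 3] := alt2_swap f _ _
  have s41 : f ![E 4, E 1] = -f ![E 1, E 4] := alt2_swap f _ _
  have s32 : f ![E 3, E 2] = -f ![E 2, E 3] := alt2_swap f _ _
  have s42 : f ![E 4, E 2] = -f ![E 2, E 4] := alt2_swap f _ _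
  have s43 : f ![E 4, E 3] = -f ![E 3, E 4] := alt2_swap f _ _
  simp only [s10, s20, s30, s40, s21, s31, s41, s32, s42, s43, alt2_diag]
  simp only [r14, r23, r34, r04]
  ring

end Decomp
/-- `H^2_{-θ^1}(h)` is three-dimensional, spanned by the classes of
`θ^1∧θ^3`, `θ^2∧θ^4` and `θ^3∧θ^5`. -/
theorem H2_deformed_neg_one
    (H : Type*) [LieRing H] [LieAlgebra ℝ H] (E : Module.Basis (Fin 5) ℝ H)
    (b01 : ⁅E 0, E 1⁆ = E 1) (b02 : ⁅E 0, E 2⁆ = -E 2)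
    (b03 : ⁅E 0, E 3⁆ = (-2 : ℝ) • E 3) (b12 : ⁅E 1, E 2⁆ = -E 4)
    (b04 : ⁅E 0, E 4⁆ = 0) (b13 : ⁅E 1, E 3⁆ = 0) (b14 : ⁅E 1, E 4⁆ = 0)
    (b23 : ⁅E 2, E 3⁆ = 0) (b24 : ⁅E 2, E 4⁆ = 0) (b34 : ⁅E 3, E 4⁆ = 0) :
    Module.finrank ℝ (Hdef H (-1) (fun v => E.repr v 0) 1) = 3 ∧
    ∃ (h13 : w2 (fun v => E.repr v 0) (fun v => E.repr v 2) ∈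
        Zdef H (-1) (fun v => E.repr v 0) 2)
      (h24 : w2 (fun v => E.repr v 1) (fun v => E.repr v 3) ∈
        Zdef H (-1) (fun v => E.repr v 0) 2)
      (h35 : w2 (fun v => E.repr v 2) (fun v => E.repr v 4) ∈
        Zdef H (-1) (fun v => E.repr v 0) 2),
      Submodule.span ℝ
        ({Submodule.Quotient.mk
            (⟨w2 (fun v => E.repr v 0) (fun v => E.repr v 2), h13⟩ :
              Zdef H (-1) (fun v => E.repr v 0) 2),
          Submodule.Quotient.mk
            (⟨w2 (fun v => E.repr v 1) (fun v => E.repr v 3), h24⟩ :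
              Zdef H (-1) (fun v => E.repr v 0) 2),
          Submodule.Quotient.mk
            (⟨w2 (fun v => E.repr v 2) (fun v => E.repr v 4), h35⟩ :
              Zdef H (-1) (fun v => E.repr v 0) 2)} :
          Set (Hdef H (-1) (fun v => E.repr v 0) 1)) = ⊤ := by
  have hm02 := w2_02_mem E b01 b02 b03 b12 b04 b13 b14 b23 b24 b34
  have hm13 := w2_13_mem E b01 b02 b03 b12 b04 b13 b14 b23 b24 b34
  have hm24 := w2_24_mem E b01 b02 b03 b12 b04 b13 b14 b23 b24 b34
  have hφN : Submodule.comap (Zdef H (-1) (fun v => E.repr v 0) 2).subtype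
      (Bdef H (-1) (fun v => E.repr v 0) 1) ≤ LinearMap.ker (evalZ E) := by
    intro z hz
    obtain ⟨h1, h2, h3⟩ := B_vanish E b02 b13 b24 z.1 hz
    rw [LinearMap.mem_ker]
    funext i
    fin_cases i
    · exact h1
    · exact h2
    · exact h3
  -- spanning
  have hspan : Submodule.span ℝ
      ({Submodule.Quotient.mk (⟨w2 (fun v => E.repr v 0) (fun v => E.repr v 2), hm02⟩ : Zdef H (-1) (fun v => E.repr v 0) 2),
        Submodule.Quotient.mk (⟨w2 (fun v => E.repr v 1) (fun v => E.repr v 3), hm13⟩ : Zdef H (-1) (fun v => E.repr v 0) 2),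
        Submodule.Quotient.mk (⟨w2 (fun v => E.repr v 2) (fun v => E.repr v 4), hm24⟩ : Zdef H (-1) (fun v => E.repr v 0) 2)} :
        Set (Hdef H (-1) (fun v => E.repr v 0) 1)) = ⊤ := by
    rw [eq_top_iff]
    rintro x -
    obtain ⟨z, rfl⟩ := Submodule.Quotient.mk_surjective _ x
    obtain ⟨⟨f, hf⟩, hker⟩ := z.2
    have hd : dDefL H (-1) (fun v => E.repr v 0) 2 ⇑f = 0 := by
      rw [hf]; exact hker
    have hmem : z - (f ![E 0, E 2] • (⟨w2 (fun v => E.repr v 0) (fun v => E.repr v 2), hm02⟩ : Zdef H (-1) (fun v => E.repr v 0) 2) + f ![E 1, E 3] • (⟨w2 (fun v => E.repr v 1) (fun v => E.repr v 3), hm13⟩ : Zdef H (-1) (fun v => E.repr v 0) 2) + f ![E 2, E 4] • (⟨w2 (fun v => E.repr v 2) (fun v => E.repr v 4), hm24⟩ : Zdef H (-1) (fun v => E.repr v 0) 2)) ∈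
        Submodule.comap (Zdef H (-1) (fun v => E.repr v 0) 2).subtype (Bdef H (-1) (fun v => E.repr v 0) 1) := by
      refine ⟨(-(f ![E 0, E 1]) / 2) • ⇑(altW1 (E.coord 1))
        + f ![E 0, E 3] • ⇑(altW1 (E.coord 3))
        + f ![E 1, E 2] • ⇑(altW1 (E.coord 4)), ?_, ?_⟩
      · exact Submodule.add_mem _ (Submodule.add_mem _
          (Submodule.smul_mem _ _ ⟨altW1 (E.coord 1), rfl⟩)
          (Submodule.smul_mem _ _ ⟨altW1 (E.coord 3), rfl⟩))
          (Submodule.smul_mem _ _ ⟨altW1 (E.coord 4), rfl⟩)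
      · rw [exact_decomp E b01 b02 b03 b12 b04 b13 b14 b23 b24 b34 f hd, hf]
        rfl
    have hq : (Submodule.Quotient.mk z : Hdef H (-1) (fun v => E.repr v 0) 1)
        = f ![E 0, E 2] • Submodule.Quotient.mk (⟨w2 (fun v => E.repr v 0) (fun v => E.repr v 2), hm02⟩ : Zdef H (-1) (fun v => E.repr v 0) 2)
        + f ![E 1, E 3] • Submodule.Quotient.mk (⟨w2 (fun v => E.repr v 1) (fun v => E.repr v 3), hm13⟩ : Zdef H (-1) (fun v => E.repr v 0) 2)
        + f ![E 2, E 4] • Submodule.Quotient.mk (⟨w2 (fun v => E.repr v 2) (fun v => E.repr v 4), hm24⟩ : Zdef H (-1) (fun v => E.repr v 0) 2) := by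
      rw [← Submodule.Quotient.mk_smul, ← Submodule.Quotient.mk_smul,
        ← Submodule.Quotient.mk_smul, ← Submodule.Quotient.mk_add,
        ← Submodule.Quotient.mk_add]
      exact (Submodule.Quotient.eq _).mpr hmem
    rw [hq]
    refine add_mem (add_mem ?_ ?_) ?_ <;>
      exact Submodule.smul_mem _ _ (Submodule.subset_span (by simp))
  -- linear independence
  have n01 : ¬((0 : Fin 5) = 1) := by decide
  have n02 : ¬((0 : Fin 5) = 2) := by decide
  have n03 : ¬((0 : Fin 5) = 3) := by decide
  have n04 : ¬((0 : Fin 5) = 4) := by decide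
  have n10 : ¬((1 : Fin 5) = 0) := by decide
  have n12 : ¬((1 : Fin 5) = 2) := by decide
  have n13 : ¬((1 : Fin 5) = 3) := by decide
  have n14 : ¬((1 : Fin 5) = 4) := by decide
  have n20 : ¬((2 : Fin 5) = 0) := by decide
  have n21 : ¬((2 : Fin 5) = 1) := by decide
  have n23 : ¬((2 : Fin 5) = 3) := by decide
  have n24 : ¬((2 : Fin 5) = 4) := by decide
  have n30 : ¬((3 : Fin 5) = 0) := by decide
  have n31 : ¬((3 : Fin 5) = 1) := by decide
  have n32 : ¬((3 : Fin 5) = 2) := by decide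
  have n34 : ¬((3 : Fin 5) = 4) := by decide
  have n40 : ¬((4 : Fin 5) = 0) := by decide
  have n41 : ¬((4 : Fin 5) = 1) := by decide
  have n42 : ¬((4 : Fin 5) = 2) := by decide
  have n43 : ¬((4 : Fin 5) = 3) := by decide
  have hind : LinearIndependent ℝ
      ![(Submodule.Quotient.mk (⟨w2 (fun v => E.repr v 0) (fun v => E.repr v 2), hm02⟩ : Zdef H (-1) (fun v => E.repr v 0) 2) : Hdef H (-1) (fun v => E.repr v 0) 1),
        Submodule.Quotient.mk (⟨w2 (fun v => E.repr v 1) (fun v => E.repr v 3), hm13⟩ : Zdef H (-1) (fun v => E.repr v 0) 2), Submodule.Quotient.mk (⟨w2 (fun v => E.repr v 2) (fun v => E.repr v 4), hm24⟩ : Zdef H (-1) (fun v => E.repr v 0) 2)] := by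
    apply LinearIndependent.of_comp (Submodule.liftQ _ (evalZ E) hφN)
    have hcomp : ⇑(Submodule.liftQ _ (evalZ E) hφN) ∘
        ![(Submodule.Quotient.mk (⟨w2 (fun v => E.repr v 0) (fun v => E.repr v 2), hm02⟩ : Zdef H (-1) (fun v => E.repr v 0) 2) : Hdef H (-1) (fun v => E.repr v 0) 1),
          Submodule.Quotient.mk (⟨w2 (fun v => E.repr v 1) (fun v => E.repr v 3), hm13⟩ : Zdef H (-1) (fun v => E.repr v 0) 2), Submodule.Quotient.mk (⟨w2 (fun v => E.repr v 2) (fun v => E.repr v 4), hm24⟩ : Zdef H (-1) (fun v => E.repr v 0) 2)]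
        = ⇑(Pi.basisFun ℝ (Fin 3)) := by
      funext i
      fin_cases i <;>
        · funext j
          fin_cases j <;>
            norm_num [evalZ, w2, Module.Basis.repr_self_apply, Finsupp.single_apply,
              Pi.basisFun_apply, Pi.single_apply, Fin.ext_iff,
              n01, n02, n03, n04, n10, n12, n13, n14, n20, n21, n23, n24, n30, n31, n32, n34, n40, n41, n42, n43]
    rw [hcomp]
    exact (Pi.basisFun ℝ (Fin 3)).linearIndependent
  have hrange : Set.range
      ![(Submodule.Quotient.mk (⟨w2 (fun v => E.repr v 0) (fun v => E.repr v 2), hm02⟩ : Zdef H (-1) (fun v => E.repr v 0) 2) : Hdef H (-1) (fun v => E.repr v 0) 1),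
        Submodule.Quotient.mk (⟨w2 (fun v => E.repr v 1) (fun v => E.repr v 3), hm13⟩ : Zdef H (-1) (fun v => E.repr v 0) 2), Submodule.Quotient.mk (⟨w2 (fun v => E.repr v 2) (fun v => E.repr v 4), hm24⟩ : Zdef H (-1) (fun v => E.repr v 0) 2)]
      = {Submodule.Quotient.mk (⟨w2 (fun v => E.repr v 0) (fun v => E.repr v 2), hm02⟩ : Zdef H (-1) (fun v => E.repr v 0) 2), Submodule.Quotient.mk (⟨w2 (fun v => E.repr v 1) (fun v => E.repr v 3), hm13⟩ : Zdef H (-1) (fun v => E.repr v 0) 2),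
          Submodule.Quotient.mk (⟨w2 (fun v => E.repr v 2) (fun v => E.repr v 4), hm24⟩ : Zdef H (-1) (fun v => E.repr v 0) 2)} := by
    ext w
    constructor
    · rintro ⟨i, rfl⟩; fin_cases i <;> simp
    · rintro (rfl | rfl | rfl)
      exacts [⟨0, rfl⟩, ⟨1, rfl⟩, ⟨2, rfl⟩]
  have bas : Module.Basis (Fin 3) ℝ (Hdef H (-1) (fun v => E.repr v 0) 1) :=
    Module.Basis.mk hind (by rw [hrange, hspan])
  have hfin : Module.finrank ℝ (Hdef H (-1) (fun v => E.repr v 0) 1) = 3 := by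
    rw [Module.finrank_eq_card_basis bas, Fintype.card_fin]
  exact ⟨hfin, hm02, hm13, hm24, hspan⟩
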